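/- For every nonnegative integer L, every integer a, and every nonzero complex number q that is not a root of unity, with a fixed square root q^{1/2}, Σ_{i≥0} q^{C(i+1,2)} [L choose i]_q · { T_{-1}(i, a; q) + T_{-1}(i, a+1; q) } = q^{C(a+1,2)} [2L+1 choose L-a]_q, where C(a,2) = a(a-1)/2 denotes the binomial coefficient. -/

import Mathlib

/-- The finite q-Pochhammer symbol `(a;q)_n`. -/
noncomputable def qPoch (a q : ℂ) (n : ℕ) : ℂ :=
  ∏ j ∈ Finset.range n, (1 - a * q ^ j)

/-- The infinite q-Pochhammer symbol `(a;q)_∞`. -/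
noncomputable def qPochInf (a q : ℂ) : ℂ :=
  ∏' j : ℕ, (1 - a * q ^ j)

/-- `1/(q;q)_n` for an integer `n`, with the convention that it is `0` for `n < 0`. -/
noncomputable def qPochInvZ (q : ℂ) (n : ℤ) : ℂ :=
  if 0 ≤ n then (qPoch q q n.toNat)⁻¹ else 0

/-- The q-trinomial coefficient `(L, b; a; q)_2`. -/
noncomputable def qTrinomial (L : ℕ) (b a : ℤ) (q : ℂ) : ℂ :=
  ∑' n : ℕ, q ^ ((n : ℤ) * ((n : ℤ) + b)) * qPoch q q L * qPochInvZ q (n : ℤ) *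
    qPochInvZ q ((n : ℤ) + a) * qPochInvZ q ((L : ℤ) - 2 * (n : ℤ) - a)

/-- The q-trinomial coefficient `T_n(L, a; q)`, where `s` is a fixed square root of `q`. -/
noncomputable def qTriT (n : ℤ) (L : ℕ) (a : ℤ) (q s : ℂ) : ℂ :=
  s ^ ((L : ℤ) * ((L : ℤ) - n) - a * (a - n)) * qTrinomial L (a - n) a q⁻¹

/-- The Gaussian (q-binomial) coefficient `[N choose k]_q`, zero unless `0 ≤ k ≤ N`. -/
noncomputable def qBinom (N k : ℤ) (q : ℂ) : ℂ :=
  if 0 ≤ k ∧ k ≤ N then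
    qPoch q q N.toNat * (qPoch q q k.toNat)⁻¹ * (qPoch q q (N - k).toNat)⁻¹
  else 0

/-- The quadratic form `Q(m,n) = 2m² + 6mn + 6n²` from Capparelli's theorems. -/
def Qcap (m n : ℕ) : ℕ := 2 * m ^ 2 + 6 * m * n + 6 * n ^ 2

open Finset in
section
variable {q s : ℂ}

-- ===== basic p and E facts =====
lemma qPoch_zero (a q : ℂ) : qPoch a q 0 = 1 := by simp [qPoch]

lemma qPoch_qq_succ (q : ℂ) (n : ℕ) : qPoch q q (n+1) = qPoch q q n * (1 - q ^ (n+1)) := by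
  rw [qPoch, Finset.prod_range_succ, ← qPoch, pow_succ']

lemma one_sub_qpow_ne (hroot : ∀ k : ℕ, 0 < k → q ^ k ≠ 1) (k : ℕ) : (1 : ℂ) - q ^ (k+1) ≠ 0 := by
  intro h
  exact hroot (k+1) (Nat.succ_pos k) (by linear_combination -h)

lemma qPoch_ne (hroot : ∀ k : ℕ, 0 < k → q ^ k ≠ 1) (n : ℕ) : qPoch q q n ≠ 0 := by
  induction n with
  | zero => simp [qPoch]
  | succ m ih => rw [qPoch_qq_succ]; exact mul_ne_zero ih (one_sub_qpow_ne hroot m)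

lemma E_neg {m : ℤ} (h : m < 0) : qPochInvZ q m = 0 := if_neg (not_le.2 h)

lemma E_of_nonneg {m : ℤ} (h : 0 ≤ m) : qPochInvZ q m = (qPoch q q m.toNat)⁻¹ := if_pos h

lemma E_coe (m : ℕ) : qPochInvZ q (m : ℤ) = (qPoch q q m)⁻¹ := by
  rw [E_of_nonneg (Int.natCast_nonneg m), Int.toNat_natCast]

lemma E_zero : qPochInvZ q 0 = 1 := by
  rw [show (0:ℤ) = ((0:ℕ):ℤ) from rfl, E_coe, qPoch_zero, inv_one]

lemma p_mul_E (hroot : ∀ k : ℕ, 0 < k → q ^ k ≠ 1) (m : ℕ) :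
    qPoch q q m * qPochInvZ q (m : ℤ) = 1 := by
  rw [E_coe]; exact mul_inv_cancel₀ (qPoch_ne hroot m)

lemma E_ne (hroot : ∀ k : ℕ, 0 < k → q ^ k ≠ 1) {m : ℤ} (h : 0 ≤ m) : qPochInvZ q m ≠ 0 := by
  rw [E_of_nonneg h]
  exact inv_ne_zero (qPoch_ne hroot _)

lemma E_step (hroot : ∀ k : ℕ, 0 < k → q ^ k ≠ 1) (m : ℤ) :
    qPochInvZ q m = (1 - q ^ (m+1)) * qPochInvZ q (m+1) := by
  rcases lt_trichotomy m (-1) with h | h | h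
  · rw [E_neg (by omega), E_neg (by omega : m + 1 < 0), mul_zero]
  · subst h; rw [E_neg (by omega), show (-1:ℤ)+1 = 0 from rfl, zpow_zero]; ring
  · have h0 : 0 ≤ m := by omega
    have h1 : 0 ≤ m + 1 := by omega
    rw [E_of_nonneg h0, E_of_nonneg h1, show (m+1).toNat = m.toNat + 1 by omega,
      qPoch_qq_succ, mul_inv, show m + 1 = ((m.toNat + 1 : ℕ) : ℤ) by omega, zpow_natCast]
    rw [mul_comm ((qPoch q q m.toNat)⁻¹), ← mul_assoc,
      mul_inv_cancel₀ (one_sub_qpow_ne hroot m.toNat), one_mul]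

lemma zq_add (hq : q ≠ 0) (a b : ℤ) : q ^ (a + b) = q ^ a * q ^ b := zpow_add₀ hq a b

-- Pascal-type identities in pure E form, valid for ALL integers
lemma pascalE1 (hq : q ≠ 0) (hroot : ∀ k : ℕ, 0 < k → q ^ k ≠ 1) (N n : ℤ) :
    (1 - q ^ N) * (qPochInvZ q n * qPochInvZ q (N - n)) =
      qPochInvZ q (n-1) * qPochInvZ q (N-n) + q ^ n * (qPochInvZ q n * qPochInvZ q (N-1-n)) := by
  have h1 : qPochInvZ q (n-1) = (1 - q ^ n) * qPochInvZ q n := by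
    have := E_step hroot (n-1); rwa [sub_add_cancel] at this
  have h2 : qPochInvZ q (N-1-n) = (1 - q ^ (N-n)) * qPochInvZ q (N-n) := by
    have := E_step hroot (N-1-n)
    rwa [show N-1-n+1 = N-n by ring] at this
  rw [h1, h2]
  have h3 : q ^ n * q ^ (N - n) = q ^ N := by
    rw [← zq_add hq]; ring_nf
  linear_combination (qPochInvZ q n * qPochInvZ q (N-n)) * h3

lemma pascalE2 (hq : q ≠ 0) (hroot : ∀ k : ℕ, 0 < k → q ^ k ≠ 1) (N n : ℤ) :
    (1 - q ^ N) * (qPochInvZ q n * qPochInvZ q (N - n)) =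
      q ^ (N-n) * (qPochInvZ q (n-1) * qPochInvZ q (N-n)) + qPochInvZ q n * qPochInvZ q (N-1-n) := by
  have h1 : qPochInvZ q (n-1) = (1 - q ^ n) * qPochInvZ q n := by
    have := E_step hroot (n-1); rwa [sub_add_cancel] at this
  have h2 : qPochInvZ q (N-1-n) = (1 - q ^ (N-n)) * qPochInvZ q (N-n) := by
    have := E_step hroot (N-1-n)
    rwa [show N-1-n+1 = N-n by ring] at this
  rw [h1, h2]
  have h3 : q ^ (N-n) * q ^ n = q ^ N := by
    rw [← zq_add hq]; ring_nf
  linear_combination (qPochInvZ q n * qPochInvZ q (N-n)) * h3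

end

open Finset in
section
variable {q s : ℂ}

-- ===== generic sum helpers over ℤ =====
lemma sum_shift (f : ℤ → ℂ) (lo hi c : ℤ) :
    ∑ x ∈ Finset.Icc lo hi, f x = ∑ x ∈ Finset.Icc (lo - c) (hi - c), f (x + c) := by
  have : Finset.Icc lo hi = Finset.map (addRightEmbedding c) (Finset.Icc (lo - c) (hi - c)) := by
    rw [Finset.map_add_right_Icc]
    congr 1 <;> ring
  rw [this, Finset.sum_map]
  simp [addRightEmbedding]

lemma sum_Icc_of_support (f : ℤ → ℂ) {lo hi lo' hi' : ℤ}
    (h : ∀ x, f x ≠ 0 → (lo ≤ x ∧ x ≤ hi) ∧ (lo' ≤ x ∧ x ≤ hi')) :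
    ∑ x ∈ Finset.Icc lo hi, f x = ∑ x ∈ Finset.Icc lo' hi', f x := by
  have key : ∀ (a b a' b' : ℤ), a' ≤ a → b ≤ b' →
      (∀ x, f x ≠ 0 → (a ≤ x ∧ x ≤ b)) →
      ∑ x ∈ Finset.Icc a' b', f x = ∑ x ∈ Finset.Icc a b, f x := by
    intro a b a' b' ha hb hsupp
    refine (Finset.sum_subset (Finset.Icc_subset_Icc ha hb) ?_).symm
    intro x _ hx
    by_contra hne
    have := hsupp x hne
    simp only [Finset.mem_Icc] at hx
    omega
  have h1 := key lo hi (min lo lo') (max hi hi') (min_le_left _ _) (le_max_left _ _)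
      (fun x hx => (h x hx).1)
  have h2 := key lo' hi' (min lo lo') (max hi hi') (min_le_right _ _) (le_max_right _ _)
      (fun x hx => (h x hx).2)
  rw [← h1, h2]

lemma sum_Icc_succ_top' (f : ℤ → ℂ) {a b : ℤ} (h : a ≤ b + 1) :
    ∑ x ∈ Finset.Icc a (b+1), f x = (∑ x ∈ Finset.Icc a b, f x) + f (b+1) := by
  have hins : Finset.Icc a (b+1) = insert (b+1) (Finset.Icc a b) := by
    ext x; simp only [Finset.mem_Icc, Finset.mem_insert]; omega
  rw [hins, Finset.sum_insert (by simp only [Finset.mem_Icc]; omega)]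
  ring

lemma sum_range_int (f : ℤ → ℂ) (N : ℕ) :
    ∑ n ∈ Finset.range N, f (n : ℤ) = ∑ n ∈ Finset.Icc (0:ℤ) ((N:ℤ) - 1), f n := by
  induction N with
  | zero => simp
  | succ m ih =>
    rw [Finset.sum_range_succ, ih, show ((m+1:ℕ):ℤ) - 1 = ((m:ℤ)-1) + 1 by push_cast; ring,
      sum_Icc_succ_top' f (by omega : (0:ℤ) ≤ (m:ℤ) - 1 + 1)]
    norm_num

end

open Finset in
section
variable {q s : ℂ}

lemma one_sub_zq_ne (hroot : ∀ k : ℕ, 0 < k → q ^ k ≠ 1) {N : ℤ} (h : 0 < N) :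
    (1:ℂ) - q ^ N ≠ 0 := by
  lift N to ℕ using le_of_lt h
  rw [zpow_natCast]
  obtain ⟨m, rfl⟩ : ∃ m, N = m + 1 := ⟨N - 1, by omega⟩
  exact one_sub_qpow_ne hroot m

lemma p_toNat_succ (hq : q ≠ 0) (hroot : ∀ k : ℕ, 0 < k → q ^ k ≠ 1) {M : ℤ} (hM : 0 ≤ M) :
    qPoch q q ((M+1).toNat) = qPoch q q (M.toNat) * (1 - q ^ (M+1)) := by
  rw [show (M+1).toNat = M.toNat + 1 by omega, qPoch_qq_succ,
    show M + 1 = ((M.toNat + 1 : ℕ) : ℤ) by omega, zpow_natCast]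

/-- The finite q-Chu-Vandermonde identity in `E`-form. -/
lemma Vlem (hq : q ≠ 0) (hroot : ∀ k : ℕ, 0 < k → q ^ k ≠ 1) (c : ℕ) :
    ∀ (k d : ℤ),
    ∑ n ∈ Finset.Icc (0:ℤ) (c:ℤ), q ^ (n*(n+k)) *
        (qPochInvZ q n * qPochInvZ q (n+k) * qPochInvZ q ((c:ℤ) - n) * qPochInvZ q (d - n)) =
    qPoch q q (((c:ℤ)+d+k).toNat) *
        (qPochInvZ q (c:ℤ) * qPochInvZ q d * qPochInvZ q ((c:ℤ)+k) * qPochInvZ q (d+k)) := by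
  induction c with
  | zero =>
    intro k d
    simp only [Nat.cast_zero, Finset.Icc_self, Finset.sum_singleton, zero_mul, zpow_zero,
      one_mul, sub_zero, zero_add, E_zero, mul_one]
    by_cases hk : 0 ≤ k
    · by_cases hd : 0 ≤ d
      · have h1 : qPoch q q ((d+k).toNat) * qPochInvZ q (d+k) = 1 := by
          have := p_mul_E hroot ((d+k).toNat)
          rwa [Int.toNat_of_nonneg (by omega)] at this
        calc qPochInvZ q k * qPochInvZ q d
            = (qPochInvZ q d * qPochInvZ q k) * 1 := by ring
          _ = (qPochInvZ q d * qPochInvZ q k) *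
                (qPoch q q ((d+k).toNat) * qPochInvZ q (d+k)) := by rw [h1]
          _ = _ := by ring
      · rw [E_neg (by omega : d < 0)]; ring
    · rw [E_neg (by omega : k < 0)]; ring
  | succ c ih =>
    intro k d
    have hcast : ((c+1:ℕ):ℤ) = (c:ℤ)+1 := by push_cast; ring
    rw [hcast, show (c:ℤ)+1+d+k = (c:ℤ)+d+k+1 by ring, show (c:ℤ)+1+k = (c:ℤ)+k+1 by ring]
    have hne : (1:ℂ) - q ^ ((c:ℤ)+1) ≠ 0 := one_sub_zq_ne hroot (by omega)
    apply mul_left_cancel₀ hne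
    rw [Finset.mul_sum]
    -- termwise Pascal split
    have hterm : ∀ n ∈ Finset.Icc (0:ℤ) ((c:ℤ)+1),
        (1 - q ^ ((c:ℤ)+1)) * (q ^ (n*(n+k)) *
          (qPochInvZ q n * qPochInvZ q (n+k) * qPochInvZ q ((c:ℤ)+1 - n) * qPochInvZ q (d - n))) =
        (q ^ (n*(n+k)) * (q ^ ((c:ℤ)+1-n) * (qPochInvZ q (n-1) * qPochInvZ q ((c:ℤ)+1-n)) *
          (qPochInvZ q (n+k) * qPochInvZ q (d-n)))) +
        (q ^ (n*(n+k)) *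
          (qPochInvZ q n * qPochInvZ q (n+k) * qPochInvZ q ((c:ℤ) - n) * qPochInvZ q (d - n))) := by
      intro n _
      have h := pascalE2 hq hroot ((c:ℤ)+1) n
      rw [show (c:ℤ)+1-1-n = (c:ℤ)-n by ring] at h
      linear_combination (q ^ (n*(n+k)) * qPochInvZ q (n+k) * qPochInvZ q (d-n)) * h
    rw [Finset.sum_congr rfl hterm, Finset.sum_add_distrib]
    -- B-part: top term vanishes, then ih
    have hB : ∑ n ∈ Finset.Icc (0:ℤ) ((c:ℤ)+1),
        (q ^ (n*(n+k)) *
          (qPochInvZ q n * qPochInvZ q (n+k) * qPochInvZ q ((c:ℤ) - n) * qPochInvZ q (d - n))) =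
        qPoch q q (((c:ℤ)+d+k).toNat) *
          (qPochInvZ q (c:ℤ) * qPochInvZ q d * qPochInvZ q ((c:ℤ)+k) * qPochInvZ q (d+k)) := by
      rw [sum_Icc_succ_top' _ (by omega : (0:ℤ) ≤ (c:ℤ)+1),
        show (c:ℤ) - ((c:ℤ)+1) = -1 by ring, E_neg (by omega : (-1:ℤ) < 0)]
      simp only [mul_zero, zero_mul, add_zero]
      exact ih k d
    rw [hB]
    -- A-part
    have hA : ∑ n ∈ Finset.Icc (0:ℤ) ((c:ℤ)+1),
        (q ^ (n*(n+k)) * (q ^ ((c:ℤ)+1-n) * (qPochInvZ q (n-1) * qPochInvZ q ((c:ℤ)+1-n)) *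
          (qPochInvZ q (n+k) * qPochInvZ q (d-n)))) =
        q ^ ((c:ℤ)+k+1) * (qPoch q q (((c:ℤ)+d+k).toNat) *
          (qPochInvZ q (c:ℤ) * qPochInvZ q (d-1) * qPochInvZ q ((c:ℤ)+k+1) * qPochInvZ q (d+k))) := by
      have hsupp : ∀ x : ℤ,
          (q ^ (x*(x+k)) * (q ^ ((c:ℤ)+1-x) * (qPochInvZ q (x-1) * qPochInvZ q ((c:ℤ)+1-x)) *
            (qPochInvZ q (x+k) * qPochInvZ q (d-x)))) ≠ 0 →
          ((0 ≤ x ∧ x ≤ (c:ℤ)+1) ∧ (1 ≤ x ∧ x ≤ (c:ℤ)+1)) := by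
        intro x hx
        constructor <;> constructor
        · by_contra h; exact hx (by rw [E_neg (by omega : x - 1 < 0)]; ring)
        · by_contra h; exact hx (by rw [E_neg (by omega : (c:ℤ)+1-x < 0)]; ring)
        · by_contra h; exact hx (by rw [E_neg (by omega : x - 1 < 0)]; ring)
        · by_contra h; exact hx (by rw [E_neg (by omega : (c:ℤ)+1-x < 0)]; ring)
      rw [sum_Icc_of_support _ hsupp, sum_shift _ 1 ((c:ℤ)+1) 1,
        show (1:ℤ) - 1 = 0 by ring, show (c:ℤ)+1-1 = (c:ℤ) by ring]
      have hterm2 : ∀ n ∈ Finset.Icc (0:ℤ) (c:ℤ),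
          (q ^ ((n+1)*((n+1)+k)) * (q ^ ((c:ℤ)+1-(n+1)) *
            (qPochInvZ q ((n+1)-1) * qPochInvZ q ((c:ℤ)+1-(n+1))) *
            (qPochInvZ q ((n+1)+k) * qPochInvZ q (d-(n+1))))) =
          q ^ ((c:ℤ)+k+1) * (q ^ (n*(n+(k+1))) *
            (qPochInvZ q n * qPochInvZ q (n+(k+1)) * qPochInvZ q ((c:ℤ) - n) *
              qPochInvZ q ((d-1) - n))) := by
        intro n _
        rw [show (n:ℤ)+1-1 = n by ring, show (c:ℤ)+1-(n+1) = (c:ℤ)-n by ring,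
          show (n:ℤ)+1+k = n+(k+1) by ring, show d-(n+1) = (d-1)-n by ring]
        have hmerge : q ^ ((n+1)*(n+(k+1))) * q ^ ((c:ℤ)-n) =
            q ^ ((c:ℤ)+k+1) * q ^ (n*(n+(k+1))) := by
          rw [← zq_add hq, ← zq_add hq]
          congr 1
          ring
        linear_combination (qPochInvZ q n * qPochInvZ q ((c:ℤ)-n) * qPochInvZ q (n+(k+1)) *
          qPochInvZ q (d-1-n)) * hmerge
      rw [Finset.sum_congr rfl hterm2, ← Finset.mul_sum, ih (k+1) (d-1)]
      rw [show (c:ℤ)+(d-1)+(k+1) = (c:ℤ)+d+k by ring, show (c:ℤ)+(k+1) = (c:ℤ)+k+1 by ring,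
        show d-1+(k+1) = d+k by ring]
    rw [hA]
    -- final algebraic identity
    by_cases hM : 0 ≤ (c:ℤ)+d+k
    · have hEc : (1 - q ^ ((c:ℤ)+1)) * qPochInvZ q ((c:ℤ)+1) = qPochInvZ q (c:ℤ) :=
        (E_step hroot (c:ℤ)).symm
      have hbr := pascalE1 hq hroot ((c:ℤ)+d+k+1) ((c:ℤ)+k+1)
      rw [show (c:ℤ)+d+k+1 - ((c:ℤ)+k+1) = d by ring,
        show (c:ℤ)+k+1-1 = (c:ℤ)+k by ring,
        show (c:ℤ)+d+k+1-1-((c:ℤ)+k+1) = d - 1 by ring] at hbr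
      have hp := p_toNat_succ hq hroot hM
      rw [hp]
      linear_combination
        (-(qPoch q q (((c:ℤ)+d+k).toNat) * (1 - q ^ ((c:ℤ)+d+k+1)) * qPochInvZ q d *
            qPochInvZ q ((c:ℤ)+k+1) * qPochInvZ q (d+k))) * hEc
          - (qPoch q q (((c:ℤ)+d+k).toNat) * qPochInvZ q (c:ℤ) * qPochInvZ q (d+k)) * hbr
    · rw [E_neg (by omega : d + k < 0)]
      ring

end

open Finset in
section
variable {q s : ℂ}

lemma s_ne (hq : q ≠ 0) (hs : s ^ 2 = q) : s ≠ 0 := by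
  intro h; apply hq; rw [← hs, h]; ring

lemma s_sq_zpow (hs : s ^ 2 = q) (z : ℤ) : s ^ (2*z) = q ^ z := by
  have h2 : s ^ (2:ℤ) = q := by
    rw [show (2:ℤ) = ((2:ℕ):ℤ) by norm_num, zpow_natCast, hs]
  rw [zpow_mul, h2]

lemma collect_s (hs0 : s ≠ 0) (e1 e2 e3 e4 e5 e6 f : ℤ) (h : e1+e2+e3+e4+e5+e6 = f) :
    s^e1 * s^e2 * s^e3 * s^e4 * s^e5 * s^e6 = s^f := by
  rw [← zpow_add₀ hs0, ← zpow_add₀ hs0, ← zpow_add₀ hs0, ← zpow_add₀ hs0, ← zpow_add₀ hs0, h]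

lemma qPoch_inv_eq (hq : q ≠ 0) (hs : s ^ 2 = q) (m : ℕ) :
    qPoch q⁻¹ q⁻¹ m = (-1)^m * (s ^ (m*(m+1)))⁻¹ * qPoch q q m := by
  induction m with
  | zero => simp [qPoch]
  | succ m ih =>
    rw [qPoch, Finset.prod_range_succ, ← qPoch, ih, qPoch_qq_succ]
    have hqm1 : (1 - q⁻¹ * (q⁻¹) ^ m) = -(q^(m+1))⁻¹ * (1 - q^(m+1)) := by
      rw [← inv_pow, ← pow_succ']
      field_simp
      rw [one_div, inv_pow, mul_sub, mul_one, inv_mul_cancel₀ (pow_ne_zero _ hq)]; ring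
    have h2 : s ^ ((m+1)*(m+1+1)) = s ^ (m*(m+1)) * q ^ (m+1) := by
      rw [← hs, ← pow_mul, ← pow_add]
      congr 1
      ring
    rw [hqm1, h2, mul_inv, pow_succ]
    ring

lemma E_inv_coe (hq : q ≠ 0) (hs : s ^ 2 = q) (n : ℕ) :
    qPochInvZ q⁻¹ (n:ℤ) = (-1)^n * s^(n*(n+1)) * qPochInvZ q (n:ℤ) := by
  rw [E_coe, E_coe, qPoch_inv_eq hq hs, mul_inv, mul_inv, inv_inv]
  have h1 : ((-1:ℂ)^n)⁻¹ = (-1)^n := by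
    rw [← inv_pow]; norm_num
  rw [h1]

lemma E_inv_eq (hq : q ≠ 0) (hs : s ^ 2 = q) {x : ℤ} (hx : 0 ≤ x) :
    qPochInvZ q⁻¹ x = (-1)^(x.toNat) * s^(x.toNat*(x.toNat+1)) * qPochInvZ q x := by
  have h := E_inv_coe hq hs x.toNat (s := s)
  rwa [Int.toNat_of_nonneg hx] at h

lemma qinv_zpow (hq : q ≠ 0) (hs : s ^ 2 = q) (z : ℤ) :
    (q⁻¹) ^ z = s ^ (-(2*z)) := by
  rw [inv_zpow, ← zpow_neg, ← s_sq_zpow hs (-z)]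
  congr 1
  ring

lemma term_conv (hq : q ≠ 0) (hroot : ∀ k : ℕ, 0 < k → q ^ k ≠ 1) (hs : s ^ 2 = q)
    (i n : ℕ) (c : ℤ) :
    s ^ ((i:ℤ)*((i:ℤ)+1) - c*(c+1)) *
      ((q⁻¹) ^ ((n:ℤ)*((n:ℤ)+(c+1))) * qPoch q⁻¹ q⁻¹ i * qPochInvZ q⁻¹ (n:ℤ) *
        qPochInvZ q⁻¹ ((n:ℤ)+c) * qPochInvZ q⁻¹ ((i:ℤ) - 2*(n:ℤ) - c)) =
    s ^ (4*(n:ℤ)^2 + 4*(n:ℤ)*(c - (i:ℤ)) - 2*(n:ℤ) + ((i:ℤ)-c)*((i:ℤ)-c+1)) *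
      (qPoch q q i * (qPochInvZ q (n:ℤ) * qPochInvZ q ((n:ℤ)+c) *
        qPochInvZ q ((i:ℤ) - 2*(n:ℤ) - c))) := by
  have hs0 : s ≠ 0 := s_ne hq hs
  by_cases h1 : 0 ≤ (n:ℤ)+c
  · by_cases h2 : 0 ≤ (i:ℤ)-2*(n:ℤ)-c
    · -- good case
      set nx := ((n:ℤ)+c).toNat with hnxdef
      set ny := ((i:ℤ)-2*(n:ℤ)-c).toNat with hnydef
      have hnx : ((nx:ℕ):ℤ) = (n:ℤ)+c := Int.toNat_of_nonneg h1
      have hny : ((ny:ℕ):ℤ) = (i:ℤ)-2*(n:ℤ)-c := Int.toNat_of_nonneg h2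
      have hxy : i + (n + nx + ny) = 2*i := by omega
      have hsign : (-1:ℂ)^i * (-1)^n * (-1)^nx * (-1)^ny = 1 := by
        rw [← pow_add, ← pow_add, ← pow_add, show i + n + nx + ny = 2*i by omega, pow_mul]
        norm_num
      rw [qinv_zpow hq hs, qPoch_inv_eq hq hs, E_inv_coe hq hs,
        E_inv_eq hq hs h1, E_inv_eq hq hs h2, ← hnxdef, ← hnydef]
      have e1 : ((i*(i+1) : ℕ) : ℤ) = (i:ℤ)*((i:ℤ)+1) := by push_cast; ring
      have e2 : ((n*(n+1) : ℕ) : ℤ) = (n:ℤ)*((n:ℤ)+1) := by push_cast; ring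
      have e3 : ((nx*(nx+1) : ℕ) : ℤ) = ((n:ℤ)+c)*(((n:ℤ)+c)+1) := by push_cast; rw [hnx]
      have e4 : ((ny*(ny+1) : ℕ) : ℤ) = ((i:ℤ)-2*(n:ℤ)-c)*(((i:ℤ)-2*(n:ℤ)-c)+1) := by
        push_cast; rw [hny]
      have hp1 : (s ^ (i*(i+1)))⁻¹ = s ^ (-((i:ℤ)*((i:ℤ)+1))) := by
        rw [← zpow_natCast s (i*(i+1)), ← zpow_neg, e1]
      have hp2 : s ^ (n*(n+1)) = s ^ ((n:ℤ)*((n:ℤ)+1)) := by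
        rw [← zpow_natCast s (n*(n+1)), e2]
      have hp3 : s ^ (nx*(nx+1)) = s ^ (((n:ℤ)+c)*(((n:ℤ)+c)+1)) := by
        rw [← zpow_natCast s (nx*(nx+1)), e3]
      have hp4 : s ^ (ny*(ny+1)) = s ^ (((i:ℤ)-2*(n:ℤ)-c)*(((i:ℤ)-2*(n:ℤ)-c)+1)) := by
        rw [← zpow_natCast s (ny*(ny+1)), e4]
      rw [hp1, hp2, hp3, hp4]
      have hmerge : s ^ ((i:ℤ)*((i:ℤ)+1) - c*(c+1)) * s ^ (-(2*((n:ℤ)*((n:ℤ)+(c+1))))) *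
          s ^ (-((i:ℤ)*((i:ℤ)+1))) * s ^ ((n:ℤ)*((n:ℤ)+1)) *
          s ^ (((n:ℤ)+c)*(((n:ℤ)+c)+1)) *
          s ^ (((i:ℤ)-2*(n:ℤ)-c)*(((i:ℤ)-2*(n:ℤ)-c)+1)) =
          s ^ (4*(n:ℤ)^2 + 4*(n:ℤ)*(c - (i:ℤ)) - 2*(n:ℤ) + ((i:ℤ)-c)*((i:ℤ)-c+1)) :=
        collect_s hs0 _ _ _ _ _ _ _ (by ring)
      linear_combination
        ((-1:ℂ)^i * (-1)^n * (-1)^nx * (-1)^ny * (qPoch q q i * (qPochInvZ q (n:ℤ) *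
          qPochInvZ q ((n:ℤ)+c) * qPochInvZ q ((i:ℤ) - 2*(n:ℤ) - c)))) * hmerge
        + (s ^ (4*(n:ℤ)^2 + 4*(n:ℤ)*(c - (i:ℤ)) - 2*(n:ℤ) + ((i:ℤ)-c)*((i:ℤ)-c+1)) *
          (qPoch q q i * (qPochInvZ q (n:ℤ) * qPochInvZ q ((n:ℤ)+c) *
            qPochInvZ q ((i:ℤ) - 2*(n:ℤ) - c)))) * hsign
    · rw [E_neg (by omega : (i:ℤ)-2*(n:ℤ)-c < 0), E_neg (by omega : (i:ℤ)-2*(n:ℤ)-c < 0)]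
      ring
  · rw [E_neg (by omega : (n:ℤ)+c < 0), E_neg (by omega : (n:ℤ)+c < 0)]
    ring

end

open Finset in

noncomputable def tTerm (q s : ℂ) (L : ℕ) (c i n : ℤ) : ℂ :=
  s ^ (c*(c+1) + 2*(i-n-c)*(i-n-c+1) + 2*c*(i-n-c) + 2*n*(n+c)) *
    (qPochInvZ q n * qPochInvZ q (n+c) * qPochInvZ q (i-2*n-c) * qPochInvZ q ((L:ℤ)-i))

section
variable {q s : ℂ}

lemma qTriT_eq_sum (hq : q ≠ 0) (hroot : ∀ k : ℕ, 0 < k → q ^ k ≠ 1) (hs : s ^ 2 = q)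
    (i : ℕ) (c : ℤ) (N : ℕ) (hN : (i:ℤ) - c < 2*N) :
    qTriT (-1) i c q s = ∑ n ∈ Finset.range N,
      s ^ (4*(n:ℤ)^2 + 4*(n:ℤ)*(c - (i:ℤ)) - 2*(n:ℤ) + ((i:ℤ)-c)*((i:ℤ)-c+1)) *
        (qPoch q q i * (qPochInvZ q (n:ℤ) * qPochInvZ q ((n:ℤ)+c) *
          qPochInvZ q ((i:ℤ) - 2*(n:ℤ) - c))) := by
  unfold qTriT qTrinomial
  rw [show c - (-1) = c + 1 by ring]
  rw [show (i:ℤ)*((i:ℤ) - (-1)) - c*(c+1) = (i:ℤ)*((i:ℤ)+1) - c*(c+1) by ring]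
  rw [tsum_eq_sum (s := Finset.range N)
    (f := fun n : ℕ => (q⁻¹) ^ ((n:ℤ)*((n:ℤ)+(c+1))) * qPoch q⁻¹ q⁻¹ i * qPochInvZ q⁻¹ (n:ℤ) *
      qPochInvZ q⁻¹ ((n:ℤ)+c) * qPochInvZ q⁻¹ ((i:ℤ) - 2*(n:ℤ) - c))
    (by
      intro n hn
      simp only [Finset.mem_range, not_lt] at hn
      simp only [E_neg (by omega : (i:ℤ) - 2*(n:ℤ) - c < 0), mul_zero])]
  rw [Finset.mul_sum]
  exact Finset.sum_congr rfl (fun n _ => term_conv hq hroot hs i n c)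

lemma qBinom_eq {N k : ℤ} (hN : 0 ≤ N) :
    qBinom N k q = qPoch q q N.toNat * (qPochInvZ q k * qPochInvZ q (N - k)) := by
  unfold qBinom
  by_cases h : 0 ≤ k ∧ k ≤ N
  · rw [if_pos h, E_of_nonneg h.1, E_of_nonneg (by omega : 0 ≤ N - k)]
    ring
  · rw [if_neg h]
    by_cases hk : 0 ≤ k
    · rw [E_neg (by omega : N - k < 0)]; ring
    · rw [E_neg (by omega : k < 0)]; ring

lemma Vz (hq : q ≠ 0) (hroot : ∀ k : ℕ, 0 < k → q ^ k ≠ 1) (cc k d M : ℤ) (h : cc ≤ M) :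
    ∑ n ∈ Finset.Icc (0:ℤ) M, q ^ (n*(n+k)) *
      (qPochInvZ q n * qPochInvZ q (n+k) * qPochInvZ q (cc - n) * qPochInvZ q (d - n)) =
    qPoch q q ((cc+d+k).toNat) *
      (qPochInvZ q cc * qPochInvZ q d * qPochInvZ q (cc+k) * qPochInvZ q (d+k)) := by
  by_cases hcc : 0 ≤ cc
  · lift cc to ℕ using hcc with c
    have hbox : ∑ n ∈ Finset.Icc (0:ℤ) M, q ^ (n*(n+k)) *
        (qPochInvZ q n * qPochInvZ q (n+k) * qPochInvZ q ((c:ℤ) - n) * qPochInvZ q (d - n)) =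
        ∑ n ∈ Finset.Icc (0:ℤ) (c:ℤ), q ^ (n*(n+k)) *
        (qPochInvZ q n * qPochInvZ q (n+k) * qPochInvZ q ((c:ℤ) - n) * qPochInvZ q (d - n)) := by
      apply sum_Icc_of_support
      intro x hx
      have hx0 : 0 ≤ x := by
        by_contra hc
        exact hx (by rw [E_neg (by omega : x < 0)]; ring)
      have hxc : x ≤ (c:ℤ) := by
        by_contra hc
        exact hx (by rw [E_neg (by omega : (c:ℤ) - x < 0)]; ring)
      exact ⟨⟨hx0, by omega⟩, ⟨hx0, hxc⟩⟩
    rw [hbox]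
    exact Vlem hq hroot c k d
  · have h0 : ∑ n ∈ Finset.Icc (0:ℤ) M, q ^ (n*(n+k)) *
        (qPochInvZ q n * qPochInvZ q (n+k) * qPochInvZ q (cc - n) * qPochInvZ q (d - n)) = 0 := by
      apply Finset.sum_eq_zero
      intro n hn
      simp only [Finset.mem_Icc] at hn
      rw [E_neg (by omega : cc - n < 0)]
      ring
    rw [h0, E_neg (by omega : cc < 0)]
    ring

lemma Scalc (hq : q ≠ 0) (hroot : ∀ k : ℕ, 0 < k → q ^ k ≠ 1) (hs : s ^ 2 = q)
    (L : ℕ) (c : ℤ) (M : ℤ) (hM : (L:ℤ) ≤ M) :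
    ∑ i ∈ Finset.Icc (0:ℤ) (L:ℤ), ∑ n ∈ Finset.Icc (0:ℤ) M, tTerm q s L c i n =
    ∑ j ∈ Finset.Icc (0:ℤ) (L:ℤ), s ^ (c*(c+1) + 2*j*(j+1) + 2*c*j) *
      (qPoch q q L * (qPochInvZ q j * qPochInvZ q ((L:ℤ)-j-c) * qPochInvZ q (j+c) *
        qPochInvZ q ((L:ℤ)-j))) := by
  have hs0 : s ≠ 0 := s_ne hq hs
  rw [Finset.sum_comm]
  have h1 : ∀ n ∈ Finset.Icc (0:ℤ) M,
      ∑ i ∈ Finset.Icc (0:ℤ) (L:ℤ), tTerm q s L c i n =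
      ∑ j ∈ Finset.Icc (0:ℤ) (L:ℤ), tTerm q s L c (j+(n+c)) n := by
    intro n hn
    simp only [Finset.mem_Icc] at hn
    rw [sum_shift (fun i => tTerm q s L c i n) 0 (L:ℤ) (n+c)]
    apply sum_Icc_of_support
    intro x hx
    by_cases hnc : 0 ≤ n + c
    · have hb1 : n ≤ x := by
        by_contra hcon
        refine hx ?_
        simp only [tTerm]
        rw [E_neg (by omega : x+(n+c)-2*n-c < 0)]
        ring
      have hb2 : x ≤ (L:ℤ)-(n+c) := by
        by_contra hcon
        refine hx ?_
        simp only [tTerm]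
        rw [E_neg (by omega : (L:ℤ)-(x+(n+c)) < 0)]
        ring
      refine ⟨⟨by omega, by omega⟩, ⟨by omega, by omega⟩⟩
    · exact absurd (by simp only [tTerm]; rw [E_neg (by omega : n + c < 0)]; ring) hx
  rw [Finset.sum_congr rfl h1, Finset.sum_comm]
  apply Finset.sum_congr rfl
  intro j hj
  simp only [Finset.mem_Icc] at hj
  have h3 : ∀ n ∈ Finset.Icc (0:ℤ) M, tTerm q s L c (j+(n+c)) n =
      s ^ (c*(c+1) + 2*j*(j+1) + 2*c*j) * (q ^ (n*(n+c)) *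
        (qPochInvZ q n * qPochInvZ q (n+c) * qPochInvZ q (j - n) *
          qPochInvZ q (((L:ℤ)-j-c) - n))) := by
    intro n _
    simp only [tTerm]
    rw [show j+(n+c)-n-c = j by ring, show j+(n+c)-2*n-c = j - n by ring,
      show (L:ℤ)-(j+(n+c)) = ((L:ℤ)-j-c) - n by ring]
    rw [show c*(c+1) + 2*j*(j+1) + 2*c*j + 2*n*(n+c) =
      (c*(c+1) + 2*j*(j+1) + 2*c*j) + 2*(n*(n+c)) by ring,
      zpow_add₀ hs0, s_sq_zpow hs]
    ring
  rw [Finset.sum_congr rfl h3, ← Finset.mul_sum,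
    Vz hq hroot j c ((L:ℤ)-j-c) M (le_trans hj.2 hM)]
  rw [show j + ((L:ℤ)-j-c) + c = ((L:ℕ):ℤ) by ring, Int.toNat_natCast,
    show (L:ℤ)-j-c+c = (L:ℤ)-j by ring]
  try ring

end

open Finset in
section
variable {q s : ℂ}

lemma double_conv (f : ℤ → ℤ → ℂ) (N M : ℕ) :
    ∑ i ∈ Finset.range N, ∑ n ∈ Finset.range M, f (i:ℤ) (n:ℤ) =
    ∑ i ∈ Finset.Icc (0:ℤ) ((N:ℤ)-1), ∑ n ∈ Finset.Icc (0:ℤ) ((M:ℤ)-1), f i n := by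
  have h1 : ∀ i ∈ Finset.range N, ∑ n ∈ Finset.range M, f (i:ℤ) (n:ℤ) =
      ∑ n ∈ Finset.Icc (0:ℤ) ((M:ℤ)-1), f (i:ℤ) n := fun i _ => sum_range_int (f (i:ℤ)) M
  rw [Finset.sum_congr rfl h1]
  exact sum_range_int (fun x => ∑ n ∈ Finset.Icc (0:ℤ) ((M:ℤ)-1), f x n) N

end


theorem Tminus1_summation (L : ℕ) (a : ℤ) (q s : ℂ) (hs : s ^ 2 = q) (hq : q ≠ 0) (hroot : ∀ k : ℕ, 0 < k → q ^ k ≠ 1) :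
    (∑' i : ℕ, q ^ ((i + 1) * i / 2) * qBinom (L : ℤ) (i : ℤ) q *
        (qTriT (-1) i a q s + qTriT (-1) i (a + 1) q s)) =
    q ^ ((a + 1) * a / 2) * qBinom (2 * (L : ℤ) + 1) ((L : ℤ) - a) q := by
  have hs0 : s ≠ 0 := s_ne hq hs
  -- Step 1: outer tsum to finite sum
  rw [tsum_eq_sum (s := Finset.range (L+1)) (by
    intro i hi
    simp only [Finset.mem_range, not_lt] at hi
    have hb : qBinom (L:ℤ) (i:ℤ) q = 0 := by
      unfold qBinom
      rw [if_neg]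
      rintro ⟨h1, h2⟩
      omega
    simp only [hb, mul_zero, zero_mul])]
  -- Step 2: rewrite each i-term
  have hiterm : ∀ i ∈ Finset.range (L+1),
      q ^ ((i + 1) * i / 2) * qBinom (L : ℤ) (i : ℤ) q *
        (qTriT (-1) i a q s + qTriT (-1) i (a + 1) q s) =
      qPoch q q L * ∑ n ∈ Finset.range (L + a.natAbs + 2),
        (tTerm q s L a (i:ℤ) (n:ℤ) + tTerm q s L (a+1) (i:ℤ) (n:ℤ)) := by
    intro i hi
    simp only [Finset.mem_range] at hi
    rw [qTriT_eq_sum hq hroot hs i a (L + a.natAbs + 2) (by omega),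
      qTriT_eq_sum hq hroot hs i (a+1) (L + a.natAbs + 2) (by omega),
      qBinom_eq (by positivity : (0:ℤ) ≤ (L:ℤ)), Int.toNat_natCast]
    have hqexp : q ^ ((i+1)*i/2) = s ^ ((i:ℤ)*((i:ℤ)+1)) := by
      obtain ⟨m, hm⟩ := Nat.even_mul_succ_self i
      have hm' : (i+1)*i = m + m := by rw [Nat.mul_comm]; exact hm
      have h1 : (i+1)*i/2 = m := by omega
      have h2 : ((i*(i+1) : ℕ) : ℤ) = (i:ℤ)*((i:ℤ)+1) := by push_cast; ring
      rw [h1, ← hs, ← pow_mul, show 2*m = i*(i+1) by omega, ← zpow_natCast s (i*(i+1)), h2]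
    rw [hqexp, mul_add, Finset.mul_sum, Finset.mul_sum, ← Finset.sum_add_distrib,
      Finset.mul_sum]
    refine Finset.sum_congr rfl fun n _ => ?_
    simp only [tTerm]
    have hpE := p_mul_E (q := q) hroot i
    have hm1 : s ^ ((i:ℤ)*((i:ℤ)+1)) *
        s ^ (4*(n:ℤ)^2 + 4*(n:ℤ)*(a - (i:ℤ)) - 2*(n:ℤ) + ((i:ℤ)-a)*((i:ℤ)-a+1)) =
        s ^ (a*(a+1) + 2*((i:ℤ)-(n:ℤ)-a)*((i:ℤ)-(n:ℤ)-a+1) + 2*a*((i:ℤ)-(n:ℤ)-a) +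
          2*(n:ℤ)*((n:ℤ)+a)) := by
      rw [← zpow_add₀ hs0]; congr 1; ring
    have hm2 : s ^ ((i:ℤ)*((i:ℤ)+1)) *
        s ^ (4*(n:ℤ)^2 + 4*(n:ℤ)*((a+1) - (i:ℤ)) - 2*(n:ℤ) + ((i:ℤ)-(a+1))*((i:ℤ)-(a+1)+1)) =
        s ^ ((a+1)*((a+1)+1) + 2*((i:ℤ)-(n:ℤ)-(a+1))*((i:ℤ)-(n:ℤ)-(a+1)+1) +
          2*(a+1)*((i:ℤ)-(n:ℤ)-(a+1)) + 2*(n:ℤ)*((n:ℤ)+(a+1))) := by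
      rw [← zpow_add₀ hs0]; congr 1; ring
    linear_combination
      (qPoch q q L * qPochInvZ q ((L:ℤ)-(i:ℤ)) *
          (s ^ ((i:ℤ)*((i:ℤ)+1)) *
            s ^ (4*(n:ℤ)^2 + 4*(n:ℤ)*(a - (i:ℤ)) - 2*(n:ℤ) + ((i:ℤ)-a)*((i:ℤ)-a+1))) *
          (qPochInvZ q (n:ℤ) * qPochInvZ q ((n:ℤ)+a) * qPochInvZ q ((i:ℤ)-2*(n:ℤ)-a))
        + qPoch q q L * qPochInvZ q ((L:ℤ)-(i:ℤ)) *
          (s ^ ((i:ℤ)*((i:ℤ)+1)) *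
            s ^ (4*(n:ℤ)^2 + 4*(n:ℤ)*((a+1) - (i:ℤ)) - 2*(n:ℤ) + ((i:ℤ)-(a+1))*((i:ℤ)-(a+1)+1))) *
          (qPochInvZ q (n:ℤ) * qPochInvZ q ((n:ℤ)+(a+1)) * qPochInvZ q ((i:ℤ)-2*(n:ℤ)-(a+1)))) * hpE
      + (qPoch q q L * qPochInvZ q ((L:ℤ)-(i:ℤ)) *
          (qPochInvZ q (n:ℤ) * qPochInvZ q ((n:ℤ)+a) * qPochInvZ q ((i:ℤ)-2*(n:ℤ)-a))) * hm1
      + (qPoch q q L * qPochInvZ q ((L:ℤ)-(i:ℤ)) *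
          (qPochInvZ q (n:ℤ) * qPochInvZ q ((n:ℤ)+(a+1)) * qPochInvZ q ((i:ℤ)-2*(n:ℤ)-(a+1)))) * hm2
  rw [Finset.sum_congr rfl hiterm, ← Finset.mul_sum]
  -- Step 3: to integer boxes
  rw [double_conv (fun x y => tTerm q s L a x y + tTerm q s L (a+1) x y) (L+1) (L + a.natAbs + 2)]
  rw [show ((L+1:ℕ):ℤ)-1 = (L:ℤ) by push_cast; ring,
    show ((L + a.natAbs + 2:ℕ):ℤ)-1 = (L:ℤ)+(a.natAbs:ℤ)+1 by push_cast; ring]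
  simp only [Finset.sum_add_distrib]
  rw [Scalc hq hroot hs L a ((L:ℤ)+(a.natAbs:ℤ)+1) (by omega),
    Scalc hq hroot hs L (a+1) ((L:ℤ)+(a.natAbs:ℤ)+1) (by omega),
    ← Finset.sum_add_distrib]
  -- Step 4: combine the two j-terms via Pascal
  have hcomb : ∀ j ∈ Finset.Icc (0:ℤ) (L:ℤ),
      (s ^ (a*(a+1) + 2*j*(j+1) + 2*a*j) *
        (qPoch q q L * (qPochInvZ q j * qPochInvZ q ((L:ℤ)-j-a) * qPochInvZ q (j+a) *
          qPochInvZ q ((L:ℤ)-j))) +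
      s ^ ((a+1)*((a+1)+1) + 2*j*(j+1) + 2*(a+1)*j) *
        (qPoch q q L * (qPochInvZ q j * qPochInvZ q ((L:ℤ)-j-(a+1)) * qPochInvZ q (j+(a+1)) *
          qPochInvZ q ((L:ℤ)-j)))) =
      (1 - q ^ ((L:ℤ)+1)) * (s ^ (a*(a+1)) * (qPoch q q L *
        (q ^ (j*(j+(a+1))) * (qPochInvZ q j * qPochInvZ q (j+(a+1)) *
          qPochInvZ q ((L:ℤ)-j) * qPochInvZ q ((L:ℤ)-a-j))))) := by
    intro j _
    rw [show (L:ℤ)-a-j = (L:ℤ)-j-a by ring]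
    have hbr := pascalE1 hq hroot ((L:ℤ)+1) (j+(a+1))
    rw [show (L:ℤ)+1-(j+(a+1)) = (L:ℤ)-j-a by ring, show j+(a+1)-1 = j+a by ring,
      show (L:ℤ)+1-1-(j+(a+1)) = (L:ℤ)-j-(a+1) by ring] at hbr
    have hma : s ^ (a*(a+1) + 2*j*(j+1) + 2*a*j) = s ^ (a*(a+1)) * q ^ (j*(j+(a+1))) := by
      rw [show a*(a+1) + 2*j*(j+1) + 2*a*j = a*(a+1) + 2*(j*(j+(a+1))) by ring,
        zpow_add₀ hs0, s_sq_zpow hs]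
    have hmb : s ^ ((a+1)*((a+1)+1) + 2*j*(j+1) + 2*(a+1)*j) =
        s ^ (a*(a+1)) * q ^ (j*(j+(a+1))) * q ^ (j+(a+1)) := by
      rw [show (a+1)*((a+1)+1) + 2*j*(j+1) + 2*(a+1)*j =
        (a*(a+1) + 2*(j*(j+(a+1)))) + 2*(j+(a+1)) by ring,
        zpow_add₀ hs0, zpow_add₀ hs0, s_sq_zpow hs, s_sq_zpow hs]
    linear_combination
      (qPoch q q L * (qPochInvZ q j * qPochInvZ q ((L:ℤ)-j-a) * qPochInvZ q (j+a) *
        qPochInvZ q ((L:ℤ)-j))) * hma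
      + (qPoch q q L * (qPochInvZ q j * qPochInvZ q ((L:ℤ)-j-(a+1)) * qPochInvZ q (j+(a+1)) *
        qPochInvZ q ((L:ℤ)-j))) * hmb
      - (s ^ (a*(a+1)) * q ^ (j*(j+(a+1))) * qPoch q q L * qPochInvZ q j *
        qPochInvZ q ((L:ℤ)-j)) * hbr
  rw [Finset.sum_congr rfl hcomb, ← Finset.mul_sum, ← Finset.mul_sum, ← Finset.mul_sum,
    Vz hq hroot (L:ℤ) (a+1) ((L:ℤ)-a) (L:ℤ) le_rfl]
  rw [show (L:ℤ) + ((L:ℤ)-a) + (a+1) = ((2*L+1:ℕ):ℤ) by push_cast; ring, Int.toNat_natCast,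
    show (L:ℤ)-a+(a+1) = (L:ℤ)+1 by ring, show (L:ℤ)+(a+1) = (L:ℤ)+a+1 by ring]
  -- Step 5: rewrite RHS
  rw [qBinom_eq (by positivity : (0:ℤ) ≤ 2*(L:ℤ)+1),
    show (2*(L:ℤ)+1).toNat = 2*L+1 by omega,
    show 2*(L:ℤ)+1-((L:ℤ)-a) = (L:ℤ)+a+1 by ring]
  have hqa : q ^ ((a+1)*a/2) = s ^ (a*(a+1)) := by
    obtain ⟨m, hm⟩ := Int.even_mul_succ_self a
    have hm' : (a+1)*a = m + m := by rw [Int.mul_comm]; exact hm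
    rw [show (a+1)*a/2 = m by omega, show a*(a+1) = 2*m by omega, s_sq_zpow hs]
  rw [hqa]
  -- Step 6: final cleanup
  have hL1 := p_mul_E (q := q) hroot L
  have hL2 : qPoch q q L * (1 - q ^ ((L:ℤ)+1)) * qPochInvZ q ((L:ℤ)+1) = 1 := by
    have h := p_mul_E (q := q) hroot (L+1)
    rw [qPoch_qq_succ, show ((L+1:ℕ):ℤ) = (L:ℤ)+1 by push_cast; ring] at h
    have hzz : q ^ ((L:ℤ)+1) = q ^ (L+1) := by
      rw [← zpow_natCast q (L+1)]
      norm_cast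
    rw [← hzz] at h
    exact h
  linear_combination
    (s ^ (a*(a+1)) * qPoch q q (2*L+1) * qPochInvZ q ((L:ℤ)-a) * qPochInvZ q ((L:ℤ)+a+1) *
      (qPoch q q L * (1 - q ^ ((L:ℤ)+1)) * qPochInvZ q ((L:ℤ)+1))) * hL1
    + (s ^ (a*(a+1)) * qPoch q q (2*L+1) * qPochInvZ q ((L:ℤ)-a) *
      qPochInvZ q ((L:ℤ)+a+1)) * hL2
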